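/- Let σ ∈ ℝⁿ be nonzero and c ∈ ℝ. Then the matrix ΔG* = (2c/‖σ‖₂⁴)·σσᵀ is symmetric and satisfies (1/2)·σᵀ(ΔG*)σ = c. Moreover, ΔG* minimizes the Frobenius norm ‖H‖_F over all symmetric matrices H with (1/2)σᵀHσ = c. -/

import Mathlib

open Matrix BigOperators

noncomputable def eNorm {n : ℕ} (x : Fin n → ℝ) : ℝ := Real.sqrt (∑ i, x i ^ 2)

noncomputable def frobNorm {n : ℕ} (A : Matrix (Fin n) (Fin n) ℝ) : ℝ :=
  Real.sqrt (∑ i, ∑ j, A i j ^ 2)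

theorem stmt5 {n : ℕ} (σ : Fin n → ℝ) (hσ : σ ≠ 0) (c : ℝ) :
    let ΔG : Matrix (Fin n) (Fin n) ℝ := (2 * c / eNorm σ ^ 4) • vecMulVec σ σ
    ΔG.IsSymm ∧
    (1 / 2) * (σ ⬝ᵥ ΔG.mulVec σ) = c ∧
    (∀ H : Matrix (Fin n) (Fin n) ℝ, H.IsSymm → (1 / 2) * (σ ⬝ᵥ H.mulVec σ) = c →
      frobNorm ΔG ≤ frobNorm H) := by
  intro ΔG
  have hs : 0 < ∑ i, σ i ^ 2 := by
    obtain ⟨i, hi⟩ : ∃ i, σ i ≠ 0 := by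
      by_contra h; push_neg at h; exact hσ (funext h)
    exact Finset.sum_pos' (fun j _ => sq_nonneg _) ⟨i, Finset.mem_univ i, by positivity⟩
  set s : ℝ := ∑ i, σ i ^ 2 with hs_def
  have he : eNorm σ ^ 4 = s ^ 2 := by
    rw [show (4:ℕ) = 2*2 from rfl, pow_mul, eNorm, Real.sq_sqrt hs.le]
  set k : ℝ := 2 * c / eNorm σ ^ 4 with hk_def
  have hk : k = 2 * c / s ^ 2 := by rw [hk_def, he]
  have hq : σ ⬝ᵥ (vecMulVec σ σ).mulVec σ = s * s := by
    simp only [dotProduct, mulVec, vecMulVec, of_apply, Finset.mul_sum]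
    rw [hs_def, Finset.sum_mul_sum]
    exact Finset.sum_congr rfl fun i _ => Finset.sum_congr rfl fun j _ => by ring
  refine ⟨?_, ?_, ?_⟩
  · ext i j
    simp [ΔG, Matrix.transpose_apply, vecMulVec, mul_comm]
  · have hqq : σ ⬝ᵥ ΔG.mulVec σ = k * (s * s) := by
      simp only [ΔG, smul_mulVec, dotProduct_smul, smul_eq_mul, hq, ← hk_def]
    rw [hqq, hk]
    field_simp
  · intro H _ hH
    have hsum : ∑ i, ∑ j, H i j * (σ i * σ j) = 2 * c := by
      have h2 : σ ⬝ᵥ H.mulVec σ = ∑ i, ∑ j, H i j * (σ i * σ j) := by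
        simp only [dotProduct, mulVec, Finset.mul_sum]
        exact Finset.sum_congr rfl fun i _ => Finset.sum_congr rfl fun j _ => by ring
      rw [h2] at hH; linarith
    set T : ℝ := ∑ i, ∑ j, H i j ^ 2 with hT_def
    have hCS : (2 * c) ^ 2 ≤ T * s ^ 2 := by
      have hcs := Finset.sum_mul_sq_le_sq_mul_sq Finset.univ
        (fun p : Fin n × Fin n => H p.1 p.2) (fun p => σ p.1 * σ p.2)
      simp only [Fintype.sum_prod_type] at hcs
      calc (2*c)^2 = (∑ i, ∑ j, H i j * (σ i * σ j)) ^ 2 := by rw [hsum]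
        _ ≤ (∑ i, ∑ j, H i j ^ 2) * ∑ i, ∑ j, (σ i * σ j) ^ 2 := hcs
        _ = T * s ^ 2 := by
            rw [hT_def]
            congr 1
            rw [pow_two, hs_def, Finset.sum_mul_sum]
            exact Finset.sum_congr rfl fun i _ => Finset.sum_congr rfl fun j _ => by ring
    have hΔ : ∑ i, ∑ j, ΔG i j ^ 2 = k ^ 2 * s ^ 2 := by
      simp only [ΔG, Matrix.smul_apply, vecMulVec, of_apply, smul_eq_mul, mul_pow, ← hk_def]
      calc ∑ i, ∑ j, k ^ 2 * (σ i ^ 2 * σ j ^ 2)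
          = k ^ 2 * ((∑ i, σ i ^ 2) * (∑ j, σ j ^ 2)) := by
            rw [Finset.sum_mul_sum, Finset.mul_sum]
            refine Finset.sum_congr rfl fun i _ => ?_
            exact (Finset.mul_sum _ _ _).symm
        _ = k ^ 2 * s ^ 2 := by rw [← hs_def]; ring
    have hs2 : (0:ℝ) < s ^ 2 := by positivity
    have h1 : k ^ 2 * s ^ 2 * s ^ 2 = (2 * c) ^ 2 := by
      rw [hk]; field_simp
    have hle : k ^ 2 * s ^ 2 ≤ T :=
      le_of_mul_le_mul_right (by rw [h1]; exact hCS) hs2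
    rw [frobNorm, frobNorm, hΔ]
    exact Real.sqrt_le_sqrt hle
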